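/- (Proposition 2.9(ii), second part: the simple module L(φ).) Let 𝕂 be a field, r and s nonzero in 𝕂 with rs⁻¹ not a root of unity, φ a nonzero element of 𝕂, and m ≥ 0 an integer. Then the (m+1)-dimensional 𝕂-vector space with basis v_0, v_1, …, v_m carries a U_{r,s}(sl_2)-module structure given by ω.v_j = φ(rs⁻¹)⁻ʲ v_j, ω′.v_j = φ(rs⁻¹)^{−(m−j)} v_j, e.v_j = φ r^{−m}[m+1−j] v_{j−1} (with v_{−1} = 0), f.v_j = [j+1] v_{j+1} (with v_{m+1} = 0), and this module L(φ) is simple. -/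

import Mathlib

/-- Generators of `U_{r,s}(sl_2)`: `e`, `f`, `ω`, `ω⁻¹`, `ω′`, `ω′⁻¹`. -/
inductive UGen : Type
  | e | f | w | winv | w' | w'inv

open FreeAlgebra in
/-- The defining relations of `U_{r,s}(sl_2)`. -/
inductive URel (𝕂 : Type) [Field 𝕂] (r s : 𝕂) :
    FreeAlgebra 𝕂 UGen → FreeAlgebra 𝕂 UGen → Prop
  | winv_right : URel 𝕂 r s (ι 𝕂 .w * ι 𝕂 .winv) 1
  | winv_left : URel 𝕂 r s (ι 𝕂 .winv * ι 𝕂 .w) 1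
  | w'inv_right : URel 𝕂 r s (ι 𝕂 .w' * ι 𝕂 .w'inv) 1
  | w'inv_left : URel 𝕂 r s (ι 𝕂 .w'inv * ι 𝕂 .w') 1
  | ww' : URel 𝕂 r s (ι 𝕂 .w * ι 𝕂 .w') (ι 𝕂 .w' * ι 𝕂 .w)
  | we : URel 𝕂 r s (ι 𝕂 .w * ι 𝕂 .e) ((r * s⁻¹) • (ι 𝕂 .e * ι 𝕂 .w))
  | wf : URel 𝕂 r s (ι 𝕂 .w * ι 𝕂 .f) ((r⁻¹ * s) • (ι 𝕂 .f * ι 𝕂 .w))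
  | w'e : URel 𝕂 r s (ι 𝕂 .w' * ι 𝕂 .e) ((r⁻¹ * s) • (ι 𝕂 .e * ι 𝕂 .w'))
  | w'f : URel 𝕂 r s (ι 𝕂 .w' * ι 𝕂 .f) ((r * s⁻¹) • (ι 𝕂 .f * ι 𝕂 .w'))
  | ef : URel 𝕂 r s (ι 𝕂 .e * ι 𝕂 .f - ι 𝕂 .f * ι 𝕂 .e)
      ((r - s)⁻¹ • (ι 𝕂 .w - ι 𝕂 .w'))

/-- The two-parameter quantum group `U_{r,s}(sl_2)`: the quotient of the free
algebra on the six generators by the defining relations. -/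
abbrev Ursl2 (𝕂 : Type) [Field 𝕂] (r s : 𝕂) : Type := RingQuot (URel 𝕂 r s)

/-- The image of a generator in `U_{r,s}(sl_2)`. -/
def UGen.toU {𝕂 : Type} [Field 𝕂] (r s : 𝕂) (x : UGen) : Ursl2 𝕂 r s :=
  RingQuot.mkAlgHom 𝕂 (URel 𝕂 r s) (FreeAlgebra.ι 𝕂 x)

/-- The quantum integer `[m] = (rᵐ − sᵐ)/(r − s)`. -/
def qInt {𝕂 : Type} [Field 𝕂] (r s : 𝕂) (m : ℕ) : 𝕂 := (r ^ m - s ^ m) / (r - s)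

/-- The standard basis vectors `v_0, …, v_m` of the `(m+1)`-dimensional space
`Fin (m+1) → 𝕂`, extended by `v_j = 0` for `j > m` (so `v_{m+1} = 0`). -/
def stdv (𝕂 : Type) [Field 𝕂] (m : ℕ) (j : ℕ) : Fin (m + 1) → 𝕂 :=
  if h : j < m + 1 then Pi.single (⟨j, h⟩ : Fin (m + 1)) 1 else 0

noncomputable section Stmt12Aux
namespace Stmt12Aux

variable {𝕂 : Type} [Field 𝕂]

@[simp] lemma qInt_zero (r s : 𝕂) : qInt r s 0 = 0 := by simp [qInt]

def dOp {n : ℕ} (d : Fin n → 𝕂) : Module.End 𝕂 (Fin n → 𝕂) where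
  toFun v := fun i => d i * v i
  map_add' u v := by funext i; simp [mul_add]
  map_smul' c v := by funext i; simp [smul_eq_mul]; ring

def eOp (r s φ : 𝕂) (m : ℕ) : Module.End 𝕂 (Fin (m+1) → 𝕂) where
  toFun v := fun i => (φ * r ^ (-(m:ℤ)) * qInt r s (m - (i:ℕ))) * v (i + 1)
  map_add' u v := by funext i; simp [mul_add]
  map_smul' c v := by funext i; simp [smul_eq_mul]; ring

def fOp (r s : 𝕂) (m : ℕ) : Module.End 𝕂 (Fin (m+1) → 𝕂) where
  toFun v := fun i => qInt r s (i:ℕ) * v (i - 1)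
  map_add' u v := by funext i; simp [mul_add]
  map_smul' c v := by funext i; simp [smul_eq_mul]; ring

@[simp] lemma dOp_apply {n : ℕ} (d : Fin n → 𝕂) (v : Fin n → 𝕂) (i : Fin n) :
    dOp d v i = d i * v i := rfl

@[simp] lemma eOp_apply (r s φ : 𝕂) (m : ℕ) (v : Fin (m+1) → 𝕂) (i : Fin (m+1)) :
    eOp r s φ m v i = (φ * r ^ (-(m:ℤ)) * qInt r s (m - (i:ℕ))) * v (i + 1) := rfl

@[simp] lemma fOp_apply (r s : 𝕂) (m : ℕ) (v : Fin (m+1) → 𝕂) (i : Fin (m+1)) :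
    fOp r s m v i = qInt r s (i:ℕ) * v (i - 1) := rfl

def wD (r s φ : 𝕂) (m : ℕ) : Fin (m+1) → 𝕂 := fun i => φ * (r * s⁻¹) ^ (-((i:ℕ):ℤ))

def w'D (r s φ : 𝕂) (m : ℕ) : Fin (m+1) → 𝕂 := fun i => φ * (r * s⁻¹) ^ (((i:ℕ):ℤ) - (m:ℤ))

lemma key0 (r s : 𝕂) (hrs : r ≠ s) (A B : ℕ) :
    qInt r s A * qInt r s (B+1) - qInt r s B * qInt r s (A+1)
      = (r^A * s^B - r^B * s^A)/(r-s) := by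
  have hu : (r - s) ≠ 0 := sub_ne_zero.mpr hrs
  unfold qInt
  rw [div_mul_div_comm, div_mul_div_comm, div_sub_div_same,
    div_eq_div_iff (mul_ne_zero hu hu) hu]
  ring

lemma key (r s φ : 𝕂) (hr : r ≠ 0) (hs : s ≠ 0) (hrs : r ≠ s) (A B : ℕ) :
    φ * r ^ (-((A+B:ℕ):ℤ)) * qInt r s A * qInt r s (B+1)
      - qInt r s B * (φ * r ^ (-((A+B:ℕ):ℤ)) * qInt r s (A+1))
    = (r-s)⁻¹ * (φ * (r*s⁻¹) ^ (-(B:ℤ)) - φ * (r*s⁻¹) ^ ((B:ℤ) - ((A+B:ℕ):ℤ))) := by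
  have hu : (r - s) ≠ 0 := sub_ne_zero.mpr hrs
  have h1 : ((B:ℤ) - ((A+B:ℕ):ℤ)) = -(A:ℤ) := by push_cast; ring
  rw [h1]
  calc φ * r ^ (-((A+B:ℕ):ℤ)) * qInt r s A * qInt r s (B+1)
      - qInt r s B * (φ * r ^ (-((A+B:ℕ):ℤ)) * qInt r s (A+1))
      = φ * r ^ (-((A+B:ℕ):ℤ)) *
        (qInt r s A * qInt r s (B+1) - qInt r s B * qInt r s (A+1)) := by ring
    _ = φ * (r^(A+B))⁻¹ * ((r^A * s^B - r^B * s^A)/(r-s)) := by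
        rw [key0 r s hrs A B, zpow_neg, zpow_natCast]
    _ = (r-s)⁻¹ * (φ * (r*s⁻¹) ^ (-(B:ℤ)) - φ * (r*s⁻¹) ^ (-(A:ℤ))) := by
        rw [zpow_neg, zpow_neg, zpow_natCast, zpow_natCast, mul_pow, mul_pow,
          mul_inv, mul_inv, inv_pow, inv_pow, inv_inv, inv_inv, pow_add]
        field_simp

section rels
variable (r s φ : 𝕂) (m : ℕ)

lemma rel_diag_inv (d : Fin (m+1) → 𝕂) (hd : ∀ i, d i ≠ 0) :
    dOp d * dOp (fun i => (d i)⁻¹) = 1 := by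
  apply LinearMap.ext; intro v; funext i
  simp only [Module.End.mul_apply, Module.End.one_apply, dOp_apply]
  rw [← mul_assoc, mul_inv_cancel₀ (hd i), one_mul]

lemma rel_diag_inv' (d : Fin (m+1) → 𝕂) (hd : ∀ i, d i ≠ 0) :
    dOp (fun i => (d i)⁻¹) * dOp d = 1 := by
  apply LinearMap.ext; intro v; funext i
  simp only [Module.End.mul_apply, Module.End.one_apply, dOp_apply]
  rw [← mul_assoc, inv_mul_cancel₀ (hd i), one_mul]

lemma rel_diag_comm (d d' : Fin (m+1) → 𝕂) : dOp d * dOp d' = dOp d' * dOp d := by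
  apply LinearMap.ext; intro v; funext i
  simp only [Module.End.mul_apply, dOp_apply]; ring

lemma rel_we (hq : r * s⁻¹ ≠ 0) :
    dOp (wD r s φ m) * eOp r s φ m = (r * s⁻¹) • (eOp r s φ m * dOp (wD r s φ m)) := by
  apply LinearMap.ext; intro v; funext i
  simp only [Module.End.mul_apply, LinearMap.smul_apply, Pi.smul_apply, smul_eq_mul,
    dOp_apply, eOp_apply, wD]
  by_cases him : (i:ℕ) = m
  · rw [show m - (i:ℕ) = 0 by omega, qInt_zero]; ring
  · have hlt : i < Fin.last m := by
      rw [Fin.lt_iff_val_lt_val, Fin.val_last]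
      exact lt_of_le_of_ne (Fin.is_le i) him
    rw [Fin.val_add_one_of_lt hlt]
    have hz : (r*s⁻¹ : 𝕂) ^ (-((i:ℕ):ℤ)) = (r*s⁻¹) * (r*s⁻¹)^(-((((i:ℕ)+1:ℕ)):ℤ)) := by
      rw [← zpow_one_add₀ hq]; congr 1; push_cast; ring
    rw [hz]; ring

lemma rel_wf (hq : r * s⁻¹ ≠ 0) :
    dOp (wD r s φ m) * fOp r s m = (r⁻¹ * s) • (fOp r s m * dOp (wD r s φ m)) := by
  apply LinearMap.ext; intro v; funext i
  simp only [Module.End.mul_apply, LinearMap.smul_apply, Pi.smul_apply, smul_eq_mul,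
    dOp_apply, fOp_apply, wD]
  by_cases hi0 : (i:ℕ) = 0
  · rw [hi0, qInt_zero]; ring
  · have ha : 1 ≤ (i:ℕ) := by omega
    rw [Fin.coe_sub_one, if_neg (fun h => hi0 (by rw [h]; rfl))]
    have hinv : (r⁻¹ * s : 𝕂) = (r*s⁻¹)⁻¹ := by rw [mul_inv, inv_inv, mul_comm]
    have hz : (r*s⁻¹ : 𝕂) ^ (-((i:ℕ):ℤ)) = (r*s⁻¹)^(-1:ℤ) * (r*s⁻¹)^(-((((i:ℕ)-1:ℕ)):ℤ)) := by
      rw [← zpow_add₀ hq]; congr 1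
      push_cast [Nat.cast_sub ha]; ring
    rw [hz, zpow_neg_one, hinv]; ring

lemma rel_w'e (hq : r * s⁻¹ ≠ 0) :
    dOp (w'D r s φ m) * eOp r s φ m = (r⁻¹ * s) • (eOp r s φ m * dOp (w'D r s φ m)) := by
  apply LinearMap.ext; intro v; funext i
  simp only [Module.End.mul_apply, LinearMap.smul_apply, Pi.smul_apply, smul_eq_mul,
    dOp_apply, eOp_apply, w'D]
  by_cases him : (i:ℕ) = m
  · rw [show m - (i:ℕ) = 0 by omega, qInt_zero]; ring
  · have hlt : i < Fin.last m := by
      rw [Fin.lt_iff_val_lt_val, Fin.val_last]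
      exact lt_of_le_of_ne (Fin.is_le i) him
    rw [Fin.val_add_one_of_lt hlt]
    have hinv : (r⁻¹ * s : 𝕂) = (r*s⁻¹)⁻¹ := by rw [mul_inv, inv_inv, mul_comm]
    have hz : (r*s⁻¹ : 𝕂) ^ (((i:ℕ):ℤ) - m) = (r*s⁻¹)^(-1:ℤ) * (r*s⁻¹)^(((((i:ℕ)+1:ℕ)):ℤ) - m) := by
      rw [← zpow_add₀ hq]; congr 1; push_cast; ring
    rw [hz, zpow_neg_one, hinv]; ring

lemma rel_w'f (hq : r * s⁻¹ ≠ 0) :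
    dOp (w'D r s φ m) * fOp r s m = (r * s⁻¹) • (fOp r s m * dOp (w'D r s φ m)) := by
  apply LinearMap.ext; intro v; funext i
  simp only [Module.End.mul_apply, LinearMap.smul_apply, Pi.smul_apply, smul_eq_mul,
    dOp_apply, fOp_apply, w'D]
  by_cases hi0 : (i:ℕ) = 0
  · rw [hi0, qInt_zero]; ring
  · have ha : 1 ≤ (i:ℕ) := by omega
    rw [Fin.coe_sub_one, if_neg (fun h => hi0 (by rw [h]; rfl))]
    have hz : (r*s⁻¹ : 𝕂) ^ (((i:ℕ):ℤ) - m) = (r*s⁻¹) * (r*s⁻¹)^(((((i:ℕ)-1:ℕ)):ℤ) - m) := by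
      rw [← zpow_one_add₀ hq]; congr 1
      push_cast [Nat.cast_sub ha]; ring
    rw [hz]; ring

lemma rel_ef (hr : r ≠ 0) (hs : s ≠ 0) (hrs : r ≠ s) :
    eOp r s φ m * fOp r s m - fOp r s m * eOp r s φ m
      = (r - s)⁻¹ • (dOp (wD r s φ m) - dOp (w'D r s φ m)) := by
  apply LinearMap.ext; intro v; funext i
  simp only [LinearMap.sub_apply, Module.End.mul_apply, LinearMap.smul_apply,
    Pi.sub_apply, Pi.smul_apply, smul_eq_mul, dOp_apply, eOp_apply, fOp_apply,
    wD, w'D, add_sub_cancel_right, sub_add_cancel]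
  set b := (i:ℕ) with hbdef
  have hb : b ≤ m := Fin.is_le i
  have hkey := key r s φ hr hs hrs (m - b) b
  rw [Nat.sub_add_cancel hb] at hkey
  -- first term bridge
  have hterm1 : qInt r s (m - b) * qInt r s (((i+1 : Fin (m+1)):ℕ))
      = qInt r s (m - b) * qInt r s (b+1) := by
    by_cases him : b = m
    · rw [show m - b = 0 by omega, qInt_zero, zero_mul, zero_mul]
    · have hlt : i < Fin.last m := by
        rw [Fin.lt_iff_val_lt_val, Fin.val_last]
        exact lt_of_le_of_ne hb him
      rw [Fin.val_add_one_of_lt hlt]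
  -- second term bridge
  have hterm2 : qInt r s b * qInt r s (m - (((i-1 : Fin (m+1)):ℕ)))
      = qInt r s b * qInt r s ((m - b) + 1) := by
    by_cases hb0 : b = 0
    · rw [hb0, qInt_zero, zero_mul, zero_mul]
    · rw [Fin.coe_sub_one, if_neg (fun h => hb0 (by rw [hbdef, h]; rfl))]
      rw [show m - (b - 1) = (m - b) + 1 by omega]
  calc φ * r ^ (-(m:ℤ)) * qInt r s (m - b) * (qInt r s (((i+1 : Fin (m+1)):ℕ)) * v i)
        - qInt r s b * (φ * r ^ (-(m:ℤ)) * qInt r s (m - (((i-1 : Fin (m+1)):ℕ))) * v i)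
      = (qInt r s (m - b) * qInt r s (((i+1 : Fin (m+1)):ℕ))) * (φ * r ^ (-(m:ℤ)) * v i)
        - (qInt r s b * qInt r s (m - (((i-1 : Fin (m+1)):ℕ)))) * (φ * r ^ (-(m:ℤ)) * v i) := by
        ring
    _ = (qInt r s (m - b) * qInt r s (b+1)) * (φ * r ^ (-(m:ℤ)) * v i)
        - (qInt r s b * qInt r s ((m - b) + 1)) * (φ * r ^ (-(m:ℤ)) * v i) := by
        rw [hterm1, hterm2]
    _ = (φ * r ^ (-(m:ℤ)) * qInt r s (m - b) * qInt r s (b+1)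
        - qInt r s b * (φ * r ^ (-(m:ℤ)) * qInt r s ((m - b)+1))) * v i := by ring
    _ = (r - s)⁻¹ * (φ * (r * s⁻¹) ^ (-(b:ℤ)) * v i - φ * (r * s⁻¹) ^ ((b:ℤ) - m) * v i) := by
        rw [hkey]; ring

end rels

end Stmt12Aux
noncomputable section Stmt12Aux2
namespace Stmt12Aux
variable {𝕂 : Type} [Field 𝕂]

lemma qInt_ne_zero (r s : 𝕂) (hr : r ≠ 0) (hs : s ≠ 0)
    (hroot : ∀ k : ℤ, (r * s⁻¹) ^ k = 1 → k = 0) (k : ℕ) (hk : k ≠ 0) :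
    qInt r s k ≠ 0 := by
  have hrs : r ≠ s := by
    intro h
    have h1 : ((r * s⁻¹ : 𝕂)) ^ (1:ℤ) = 1 := by
      rw [zpow_one, h, mul_inv_cancel₀ hs]
    exact one_ne_zero (hroot 1 h1)
  intro h
  rw [qInt, div_eq_zero_iff] at h
  rcases h with h | h
  · have h2 : r ^ k = s ^ k := sub_eq_zero.mp h
    have h3 : ((r * s⁻¹ : 𝕂)) ^ ((k:ℕ):ℤ) = 1 := by
      rw [zpow_natCast, mul_pow, inv_pow, h2, mul_inv_cancel₀ (pow_ne_zero k hs)]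
    exact hk (by exact_mod_cast hroot k h3)
  · exact sub_ne_zero.mpr hrs h

lemma rs_ne (r s : 𝕂) (hs : s ≠ 0)
    (hroot : ∀ k : ℤ, (r * s⁻¹) ^ k = 1 → k = 0) : r ≠ s := by
  intro h
  have h1 : ((r * s⁻¹ : 𝕂)) ^ (1:ℤ) = 1 := by
    rw [zpow_one, h, mul_inv_cancel₀ hs]
  exact one_ne_zero (hroot 1 h1)

lemma dOp_single {n : ℕ} (d : Fin n → 𝕂) (k : Fin n) :
    dOp d (Pi.single k 1 : Fin n → 𝕂) = d k • (Pi.single k 1 : Fin n → 𝕂) := by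
  funext i
  simp only [dOp_apply, Pi.smul_apply, smul_eq_mul, Pi.single_apply]
  by_cases h : i = k
  · subst h; simp
  · simp [h]

lemma eOp_single (r s φ : 𝕂) (m : ℕ) (k : Fin (m+1)) :
    eOp r s φ m (Pi.single k 1 : Fin (m+1) → 𝕂)
      = (φ * r ^ (-(m:ℤ)) * qInt r s (m - ((k-1 : Fin (m+1)):ℕ))) • (Pi.single (k-1) 1 : Fin (m+1) → 𝕂) := by
  funext i
  simp only [eOp_apply, Pi.smul_apply, smul_eq_mul, Pi.single_apply]
  by_cases h : i = k - 1
  · subst h; rw [sub_add_cancel]; simp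
  · rw [if_neg (fun hc => h (by rw [← hc, add_sub_cancel_right])), if_neg h, mul_zero, mul_zero]

lemma fOp_single (r s : 𝕂) (m : ℕ) (k : Fin (m+1)) :
    fOp r s m (Pi.single k 1 : Fin (m+1) → 𝕂)
      = qInt r s ((k+1 : Fin (m+1)):ℕ) • (Pi.single (k+1) 1 : Fin (m+1) → 𝕂) := by
  funext i
  simp only [fOp_apply, Pi.smul_apply, smul_eq_mul, Pi.single_apply]
  by_cases h : i = k + 1
  · subst h; rw [add_sub_cancel_right]; simp
  · rw [if_neg (fun hc => h (by rw [← hc, sub_add_cancel])), if_neg h, mul_zero, mul_zero]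

end Stmt12Aux
noncomputable section Stmt12Aux3
namespace Stmt12Aux
variable {𝕂 : Type} [Field 𝕂]

def gmap (r s φ : 𝕂) (m : ℕ) : UGen → Module.End 𝕂 (Fin (m+1) → 𝕂)
  | .e => eOp r s φ m
  | .f => fOp r s m
  | .w => dOp (wD r s φ m)
  | .winv => dOp (fun i => (wD r s φ m i)⁻¹)
  | .w' => dOp (w'D r s φ m)
  | .w'inv => dOp (fun i => (w'D r s φ m i)⁻¹)

@[simp] lemma gmap_e (r s φ : 𝕂) (m : ℕ) : gmap r s φ m .e = eOp r s φ m := rfl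
@[simp] lemma gmap_f (r s φ : 𝕂) (m : ℕ) : gmap r s φ m .f = fOp r s m := rfl
@[simp] lemma gmap_w (r s φ : 𝕂) (m : ℕ) : gmap r s φ m .w = dOp (wD r s φ m) := rfl
@[simp] lemma gmap_winv (r s φ : 𝕂) (m : ℕ) :
    gmap r s φ m .winv = dOp (fun i => (wD r s φ m i)⁻¹) := rfl
@[simp] lemma gmap_w' (r s φ : 𝕂) (m : ℕ) : gmap r s φ m .w' = dOp (w'D r s φ m) := rfl
@[simp] lemma gmap_w'inv (r s φ : 𝕂) (m : ℕ) :
    gmap r s φ m .w'inv = dOp (fun i => (w'D r s φ m i)⁻¹) := rfl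

lemma hrel_lift (r s φ : 𝕂) (hr : r ≠ 0) (hs : s ≠ 0) (hφ : φ ≠ 0) (hrs : r ≠ s) :
    ∀ (m : ℕ) ⦃x y : FreeAlgebra 𝕂 UGen⦄, URel 𝕂 r s x y →
      FreeAlgebra.lift 𝕂 (gmap r s φ m) x = FreeAlgebra.lift 𝕂 (gmap r s φ m) y := by
  intro m x y h
  have hq : r * s⁻¹ ≠ 0 := mul_ne_zero hr (inv_ne_zero hs)
  have hwD : ∀ i, wD r s φ m i ≠ 0 := fun i => mul_ne_zero hφ (zpow_ne_zero _ hq)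
  have hw'D : ∀ i, w'D r s φ m i ≠ 0 := fun i => mul_ne_zero hφ (zpow_ne_zero _ hq)
  cases h <;>
    simp only [map_mul, map_one, map_smul, map_sub, FreeAlgebra.lift_ι_apply,
      gmap_e, gmap_f, gmap_w, gmap_winv, gmap_w', gmap_w'inv]
  · exact rel_diag_inv m _ hwD
  · exact rel_diag_inv' m _ hwD
  · exact rel_diag_inv m _ hw'D
  · exact rel_diag_inv' m _ hw'D
  · exact rel_diag_comm m _ _
  · exact rel_we r s φ m hq
  · exact rel_wf r s φ m hq
  · exact rel_w'e r s φ m hq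
  · exact rel_w'f r s φ m hq
  · exact rel_ef r s φ m hr hs hrs
end Stmt12Aux

/-- Proposition 2.9(ii), second part: the `(m+1)`-dimensional `𝕂`-vector space with
basis `v_0, …, v_m` carries a `U_{r,s}(sl_2)`-module structure with
`ω.v_j = φ(rs⁻¹)⁻ʲ v_j`, `ω′.v_j = φ(rs⁻¹)^{−(m−j)} v_j`,
`e.v_j = φ r^{−m}[m+1−j] v_{j−1}` (`v_{−1} = 0`), `f.v_j = [j+1] v_{j+1}`
(`v_{m+1} = 0`), and this module `L(φ)` is simple. -/
theorem stmt12 {𝕂 : Type} [Field 𝕂] (r s : 𝕂) (hr : r ≠ 0) (hs : s ≠ 0)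
    (hroot : ∀ k : ℤ, (r * s⁻¹) ^ k = 1 → k = 0)
    (φ : 𝕂) (hφ : φ ≠ 0) (m : ℕ) :
    ∃ ρ : Ursl2 𝕂 r s →ₐ[𝕂] Module.End 𝕂 (Fin (m + 1) → 𝕂),
      (∀ j : ℕ, j ≤ m → ρ (UGen.toU r s .w) (stdv 𝕂 m j) =
        (φ * (r * s⁻¹) ^ (-(j : ℤ))) • stdv 𝕂 m j) ∧
      (∀ j : ℕ, j ≤ m → ρ (UGen.toU r s .w') (stdv 𝕂 m j) =
        (φ * (r * s⁻¹) ^ (-((m : ℤ) - (j : ℤ)))) • stdv 𝕂 m j) ∧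
      (ρ (UGen.toU r s .e) (stdv 𝕂 m 0) = 0) ∧
      (∀ j : ℕ, j + 1 ≤ m → ρ (UGen.toU r s .e) (stdv 𝕂 m (j + 1)) =
        (φ * r ^ (-(m : ℤ)) * qInt r s (m - j)) • stdv 𝕂 m j) ∧
      (∀ j : ℕ, j ≤ m → ρ (UGen.toU r s .f) (stdv 𝕂 m j) =
        qInt r s (j + 1) • stdv 𝕂 m (j + 1)) ∧
      (letI : Module (Ursl2 𝕂 r s) (Fin (m + 1) → 𝕂) :=
        Module.compHom (Fin (m + 1) → 𝕂) ρ.toRingHom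
       IsSimpleModule (Ursl2 𝕂 r s) (Fin (m + 1) → 𝕂)) := by
    classical
  have hrs : r ≠ s := Stmt12Aux.rs_ne r s hs hroot
  have hq : r * s⁻¹ ≠ 0 := mul_ne_zero hr (inv_ne_zero hs)
  set ρ : Ursl2 𝕂 r s →ₐ[𝕂] Module.End 𝕂 (Fin (m + 1) → 𝕂) :=
    RingQuot.liftAlgHom 𝕂 ⟨FreeAlgebra.lift 𝕂 (Stmt12Aux.gmap r s φ m),
      Stmt12Aux.hrel_lift r s φ hr hs hφ hrs m⟩ with hρdef
  have hρ : ∀ x : UGen, ρ (UGen.toU r s x) = Stmt12Aux.gmap r s φ m x := by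
    intro x
    rw [hρdef, UGen.toU, RingQuot.liftAlgHom_mkAlgHom_apply, FreeAlgebra.lift_ι_apply]
  refine ⟨ρ, ?_, ?_, ?_, ?_, ?_, ?_⟩
  · -- w
    intro j hj
    have hst : stdv 𝕂 m j = Pi.single (⟨j, by omega⟩ : Fin (m+1)) 1 := dif_pos _
    rw [hρ, hst, Stmt12Aux.gmap_w, Stmt12Aux.dOp_single]
    rfl
  · -- w'
    intro j hj
    have hst : stdv 𝕂 m j = Pi.single (⟨j, by omega⟩ : Fin (m+1)) 1 := dif_pos _
    rw [hρ, hst, Stmt12Aux.gmap_w', Stmt12Aux.dOp_single,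
      show (-((m:ℤ) - (j:ℤ))) = ((j:ℤ) - (m:ℤ)) by ring]
    rfl
  · -- e on v_0
    have hst : stdv 𝕂 m 0 = Pi.single (⟨0, by omega⟩ : Fin (m+1)) 1 := dif_pos _
    have h00 : (⟨0, by omega⟩ : Fin (m+1)) = 0 := by ext; simp
    rw [hρ, hst, h00, Stmt12Aux.gmap_e, Stmt12Aux.eOp_single]
    rw [show ((0 : Fin (m+1)) - 1) = -1 by rw [zero_sub]]
    rw [show ((-1 : Fin (m+1)) : ℕ) = m from Fin.coe_neg_one]
    rw [show m - m = 0 by omega, Stmt12Aux.qInt_zero, mul_zero, zero_smul]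
  · -- e on v_{j+1}
    intro j hj
    have hst : stdv 𝕂 m (j+1) = Pi.single (⟨j+1, by omega⟩ : Fin (m+1)) 1 := dif_pos _
    have hst' : stdv 𝕂 m j = Pi.single (⟨j, by omega⟩ : Fin (m+1)) 1 := dif_pos _
    rw [hρ, hst, hst', Stmt12Aux.gmap_e, Stmt12Aux.eOp_single]
    have hsub : ((⟨j+1, by omega⟩ : Fin (m+1)) - 1) = (⟨j, by omega⟩ : Fin (m+1)) := by
      ext
      rw [Fin.coe_sub_one, if_neg (by intro hc; exact Nat.succ_ne_zero j (by simpa using congrArg Fin.val hc))]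
      simp
    rw [hsub]
  · -- f
    intro j hj
    have hst : stdv 𝕂 m j = Pi.single (⟨j, by omega⟩ : Fin (m+1)) 1 := dif_pos _
    rw [hρ, hst, Stmt12Aux.gmap_f, Stmt12Aux.fOp_single]
    rcases Nat.lt_or_ge j m with hjm | hjm
    · have hadd : ((⟨j, by omega⟩ : Fin (m+1)) + 1) = (⟨j+1, by omega⟩ : Fin (m+1)) := by
        ext
        rw [Fin.val_add_one_of_lt (by rw [Fin.lt_iff_val_lt_val, Fin.val_last]; exact hjm)]
      rw [hadd, show stdv 𝕂 m (j+1) = Pi.single (⟨j+1, by omega⟩ : Fin (m+1)) 1 from dif_pos _]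
    · have hjm' : j = m := by omega
      subst hjm'
      have hadd : ((⟨j, by omega⟩ : Fin (j+1)) + 1) = (0 : Fin (j+1)) := by
        rw [show (⟨j, by omega⟩ : Fin (j+1)) = Fin.last j from rfl, Fin.last_add_one]
      rw [hadd, show stdv 𝕂 j (j+1) = 0 from dif_neg (by omega)]
      rw [show ((0 : Fin (j+1)) : ℕ) = 0 from rfl, Stmt12Aux.qInt_zero, zero_smul, smul_zero]
  · -- simplicity
    letI inst : Module (Ursl2 𝕂 r s) (Fin (m + 1) → 𝕂) :=
      Module.compHom (Fin (m + 1) → 𝕂) ρ.toRingHom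
    show IsSimpleModule (Ursl2 𝕂 r s) (Fin (m + 1) → 𝕂)
    have hK : ∀ (c : 𝕂) (w : Fin (m+1) → 𝕂) (N : Submodule (Ursl2 𝕂 r s) (Fin (m+1) → 𝕂)),
        w ∈ N → c • w ∈ N := by
      intro c w N hw
      have h2 := N.smul_mem (algebraMap 𝕂 (Ursl2 𝕂 r s) c) hw
      have h3 : (algebraMap 𝕂 (Ursl2 𝕂 r s) c) • w = c • w := by
        show ρ (algebraMap 𝕂 (Ursl2 𝕂 r s) c) w = c • w
        rw [AlgHom.commutes]
        rfl
      rwa [h3] at h2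
    have hE : ∀ (w : Fin (m+1) → 𝕂) (N : Submodule (Ursl2 𝕂 r s) (Fin (m+1) → 𝕂)),
        w ∈ N → Stmt12Aux.eOp r s φ m w ∈ N := by
      intro w N hw
      have h2 := N.smul_mem (UGen.toU r s .e) hw
      have h3 : (UGen.toU r s .e) • w = Stmt12Aux.eOp r s φ m w := by
        show ρ (UGen.toU r s .e) w = Stmt12Aux.eOp r s φ m w
        rw [hρ, Stmt12Aux.gmap_e]
      rwa [h3] at h2
    have hF : ∀ (w : Fin (m+1) → 𝕂) (N : Submodule (Ursl2 𝕂 r s) (Fin (m+1) → 𝕂)),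
        w ∈ N → Stmt12Aux.fOp r s m w ∈ N := by
      intro w N hw
      have h2 := N.smul_mem (UGen.toU r s .f) hw
      have h3 : (UGen.toU r s .f) • w = Stmt12Aux.fOp r s m w := by
        show ρ (UGen.toU r s .f) w = Stmt12Aux.fOp r s m w
        rw [hρ, Stmt12Aux.gmap_f]
      rwa [h3] at h2
    haveI hnt : Nontrivial (Submodule (Ursl2 𝕂 r s) (Fin (m+1) → 𝕂)) := by
      refine ⟨⊥, ⊤, fun h => ?_⟩
      have h1 : (Pi.single 0 1 : Fin (m+1) → 𝕂) ∈ (⊤ : Submodule (Ursl2 𝕂 r s) (Fin (m+1) → 𝕂)) :=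
        trivial
      rw [← h, Submodule.mem_bot] at h1
      have h2 := congrFun h1 0
      simp at h2
    refine { eq_bot_or_eq_top := ?_ }
    · intro N
      rcases eq_or_ne N ⊥ with hN | hN
      · exact Or.inl hN
      right
      obtain ⟨v, hvN, hv0⟩ := (Submodule.ne_bot_iff N).mp hN
      have hdes : ∀ n : ℕ, ∀ w : Fin (m+1) → 𝕂, w ∈ N → w ≠ 0 →
          (∀ i : Fin (m+1), n < (i:ℕ) → w i = 0) →
          (Pi.single 0 1 : Fin (m+1) → 𝕂) ∈ N := by
        intro n
        induction n with
        | zero =>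
          intro w hwN hw0 hb
          have hw00 : w 0 ≠ 0 := by
            intro hz
            apply hw0; funext i
            rcases Nat.eq_zero_or_pos (i:ℕ) with h0 | h0
            · have hi : i = 0 := by ext; simpa using h0
              rw [hi, hz]; rfl
            · rw [hb i h0]; rfl
          have hrep : (Pi.single 0 1 : Fin (m+1) → 𝕂) = (w 0)⁻¹ • w := by
            funext i
            by_cases hi : i = 0
            · subst hi
              simp [inv_mul_cancel₀ hw00]
            · have h0 : 0 < (i:ℕ) := by
                rcases Nat.eq_zero_or_pos (i:ℕ) with h0 | h0
                · exact absurd (by ext; simpa using h0 : i = 0) hi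
                · exact h0
              simp [Pi.single_apply, hi, hb i h0]
          rw [hrep]; exact hK _ _ _ hwN
        | succ n ih =>
          intro w hwN hw0 hb
          by_cases hall : ∀ i : Fin (m+1), n < (i:ℕ) → w i = 0
          · exact ih w hwN hw0 hall
          push_neg at hall
          obtain ⟨i0, hi0n, hi0ne⟩ := hall
          have hi0 : (i0:ℕ) = n + 1 := by
            have h4 : ¬ (n + 1 < (i0:ℕ)) := fun hc => hi0ne (hb i0 hc)
            omega
          have hnm : n + 1 ≤ m := by have := i0.isLt; omega
          have hw'N : Stmt12Aux.eOp r s φ m w ∈ N := hE w N hwN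
          have hne : Stmt12Aux.eOp r s φ m w ⟨n, by omega⟩ ≠ 0 := by
            rw [Stmt12Aux.eOp_apply]
            have hvi : ((⟨n, by omega⟩ : Fin (m+1)) + 1) = i0 := by
              ext
              rw [Fin.val_add_one_of_lt (by
                rw [Fin.lt_iff_val_lt_val, Fin.val_last]
                show n < m
                omega)]
              simpa using hi0.symm
            rw [hvi]
            refine mul_ne_zero (mul_ne_zero (mul_ne_zero hφ (zpow_ne_zero _ hr)) ?_) hi0ne
            exact Stmt12Aux.qInt_ne_zero r s hr hs hroot _ (by
              show m - ((⟨n, by omega⟩ : Fin (m+1)) : ℕ) ≠ 0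
              simp only [Fin.val_mk]
              omega)
          have hb' : ∀ i : Fin (m+1), n < (i:ℕ) → Stmt12Aux.eOp r s φ m w i = 0 := by
            intro i hi
            rw [Stmt12Aux.eOp_apply]
            by_cases him : (i:ℕ) = m
            · rw [show m - (i:ℕ) = 0 by omega, Stmt12Aux.qInt_zero, mul_zero, zero_mul]
            · have hlt : i < Fin.last m := by
                rw [Fin.lt_iff_val_lt_val, Fin.val_last]
                exact lt_of_le_of_ne (Fin.is_le i) him
              rw [hb (i+1) (by rw [Fin.val_add_one_of_lt hlt]; omega), mul_zero]
          exact ih _ hw'N (fun hzz => hne (by rw [hzz]; rfl)) hb'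
      have hs0 : (Pi.single 0 1 : Fin (m+1) → 𝕂) ∈ N :=
        hdes m v hvN hv0 (fun i hi => absurd i.isLt (by omega))
      have hup : ∀ j : ℕ, (hj : j ≤ m) →
          (Pi.single (⟨j, by omega⟩ : Fin (m+1)) 1 : Fin (m+1) → 𝕂) ∈ N := by
        intro j
        induction j with
        | zero =>
          intro _
          have h0 : (⟨0, by omega⟩ : Fin (m+1)) = 0 := by ext; simp
          rw [h0]; exact hs0
        | succ j ih =>
          intro hj
          have hj' : j ≤ m := by omega
          have h1 := hF _ N (ih hj')
          rw [Stmt12Aux.fOp_single] at h1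
          have hadd : ((⟨j, by omega⟩ : Fin (m+1)) + 1) = (⟨j+1, by omega⟩ : Fin (m+1)) := by
            ext
            rw [Fin.val_add_one_of_lt (by
              rw [Fin.lt_iff_val_lt_val, Fin.val_last]
              show j < m
              omega)]
          rw [hadd] at h1
          have hval : ((⟨j+1, by omega⟩ : Fin (m+1)) : ℕ) = j + 1 := rfl
          rw [hval] at h1
          have hcne : qInt r s (j+1) ≠ 0 :=
            Stmt12Aux.qInt_ne_zero r s hr hs hroot (j+1) (by omega)
          have h2 := hK (qInt r s (j+1))⁻¹ _ N h1
          rwa [smul_smul, inv_mul_cancel₀ hcne, one_smul] at h2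
      rw [Submodule.eq_top_iff']
      intro x
      have hterm : ∀ i : Fin (m+1),
          x i • (Pi.single i 1 : Fin (m+1) → 𝕂) = Pi.single i (x i) := by
        intro i
        rw [← Pi.single_smul, smul_eq_mul, mul_one]
      have hrepr : x = ∑ i : Fin (m+1), x i • (Pi.single i 1 : Fin (m+1) → 𝕂) := by
        simp_rw [hterm, Finset.univ_sum_single]
      rw [hrepr]
      refine Submodule.sum_mem N (fun i _ => hK _ _ N ?_)
      have h3 := hup (i:ℕ) (Fin.is_le i)
      have heq : (⟨(i:ℕ), by omega⟩ : Fin (m+1)) = i := rfl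
      rwa [heq] at h3
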